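/- For n ≥ 3 and noncrossing partitions x, x' ∈ PE_n whose meet w in NC_n has {n-1, n} as a block, the partition w' obtained from w by replacing the block {n-1, n} with the two singleton blocks {n-1} and {n} is the meet of x and x' in PE_n. -/

import Mathlib

/-- A set partition of `[n]` (as a setoid on `Fin n`) is noncrossing. -/
def IsNoncrossing {n : ℕ} (x : Setoid (Fin n)) : Prop :=
  ∀ i j k l : Fin n, i < j → j < k → k < l → x i k → x j l → x i j

/-- `B` is a block of the set partition `x`. -/
def IsBlock {n : ℕ} (x : Setoid (Fin n)) (B : Set (Fin n)) : Prop :=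
  ∃ a, B = {b | x a b}

/-- The set partition whose unique (possibly) non-singleton block is `S`. -/
def blockSetoid {n : ℕ} (S : Set (Fin n)) : Setoid (Fin n) where
  r a b := a = b ∨ (a ∈ S ∧ b ∈ S)
  iseqv := by
    refine ⟨fun _ => Or.inl rfl, ?_, ?_⟩
    · rintro a b (rfl | ⟨h1, h2⟩)
      · exact Or.inl rfl
      · exact Or.inr ⟨h2, h1⟩
    · rintro a b c (rfl | ⟨h1, h2⟩) h
      · exact h
      · rcases h with rfl | ⟨h3, h4⟩
        · exact Or.inr ⟨h1, h2⟩
        · exact Or.inr ⟨h1, h4⟩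

/-- The element `x_i` of the left-modular chain: its unique non-singleton block is
`[i-1] ∪ {n}` (in 1-based terms), i.e. the elements with value `< i-1` or value `n-1`. -/
def xChain (n i : ℕ) : Setoid (Fin n) :=
  blockSetoid {a : Fin n | a.val + 1 < i ∨ a.val = n - 1}

/-- The noncrossing closure: the smallest noncrossing partition above `x`. -/
def ncClosure {n : ℕ} (x : Setoid (Fin n)) : Setoid (Fin n) :=
  sInf {y | IsNoncrossing y ∧ x ≤ y}

/-- The join of two noncrossing partitions in `NC_n`. -/
def joinNC {n : ℕ} (x y : Setoid (Fin n)) : Setoid (Fin n) :=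
  ncClosure (x ⊔ y)

/-- The join of a set of noncrossing partitions in `NC_n`. -/
def joinSetNC {n : ℕ} (X : Set (Setoid (Fin n))) : Setoid (Fin n) :=
  ncClosure (sSup X)

/-- Membership in `PE_n`: noncrossing, `{n-1, n}` is not a block, and it is not the case
that `{n}` is a singleton block while `1 ∼ n-1`. -/
def PEmem {n : ℕ} (x : Setoid (Fin n)) : Prop :=
  IsNoncrossing x ∧
  ¬ IsBlock x {a : Fin n | a.val = n - 2 ∨ a.val = n - 1} ∧
  ¬ (IsBlock x {a : Fin n | a.val = n - 1} ∧
      ∃ a b : Fin n, a.val = 0 ∧ b.val = n - 2 ∧ x a b)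

/-- `m` is the meet of `x` and `y` in the poset `PE_n`. -/
def IsMeetPE {n : ℕ} (x y m : Setoid (Fin n)) : Prop :=
  PEmem m ∧ m ≤ x ∧ m ≤ y ∧ ∀ z, PEmem z → z ≤ x → z ≤ y → z ≤ m

/-- `j` is the join of `x` and `y` in the poset `PE_n`. -/
def IsJoinPE {n : ℕ} (x y j : Setoid (Fin n)) : Prop :=
  PEmem j ∧ x ≤ j ∧ y ≤ j ∧ ∀ z, PEmem z → x ≤ z → y ≤ z → j ≤ z

/-- `x ⋖ y` in `PE_n`. -/
def CovPE {n : ℕ} (x y : Setoid (Fin n)) : Prop :=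
  PEmem x ∧ PEmem y ∧ x < y ∧ ∀ z, PEmem z → x < z → ¬ z < y

/-- The atoms of `NC_n`: partitions `a_{i,j}` with unique non-singleton block `{i, j}`. -/
def IsAtomNC {n : ℕ} (a : Setoid (Fin n)) : Prop :=
  ∃ i j : Fin n, i < j ∧ a = blockSetoid {i, j}

/-- The partial order `≼` on atoms of `NC_n` induced by the classes
`A_j = {a : a ≤ x_j and a ≰ x_{j-1}}`. -/
def atomPrec {n : ℕ} (a b : Setoid (Fin n)) : Prop :=
  ∃ i j : ℕ, 1 ≤ i ∧ i < j ∧ j ≤ n - 1 ∧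
    (a ≤ xChain n i ∧ ¬ a ≤ xChain n (i - 1)) ∧
    (b ≤ xChain n j ∧ ¬ b ≤ xChain n (j - 1))

/-- A set of atoms of `NC_n` is bounded below (BB). -/
def IsBBset {n : ℕ} (X : Set (Setoid (Fin n))) : Prop :=
  ∀ d ∈ X, ∃ a, IsAtomNC a ∧ atomPrec a d ∧ a < joinSetNC X

/-- A set of atoms of `NC_n` is NBB: no nonempty subset is bounded below. -/
def IsNBBset {n : ℕ} (X : Set (Setoid (Fin n))) : Prop :=
  ∀ Y ⊆ X, Y.Nonempty → ¬ IsBBset Y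

/-- `X` is an NBB base for the top element of `NC_n`. -/
def IsNBBBaseTop {n : ℕ} (X : Set (Setoid (Fin n))) : Prop :=
  (∀ a ∈ X, IsAtomNC a) ∧ IsNBBset X ∧ joinSetNC X = ⊤

/-- The graph `τ(X)` on vertex set `[n]` associated with a set `X` of atoms:
`i` and `j` are adjacent iff `a_{i,j} ∈ X`. -/
def atomGraph {n : ℕ} (X : Set (Setoid (Fin n))) : SimpleGraph (Fin n) where
  Adj i j := i ≠ j ∧ blockSetoid ({i, j} : Set (Fin n)) ∈ X
  symm := ⟨by
    rintro i j ⟨hne, hm⟩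
    exact ⟨hne.symm, by rwa [Set.pair_comm]⟩⟩
  loopless := ⟨fun i h => h.1 rfl⟩

/-- The parking label of the cover `x ⋖ y` is `p`: `y` merges blocks `B₁, B₂` of `x` with
`min B₁ < min B₂`, and `p = max { j ∈ B₁ : j ≤ i for all i ∈ B₂ }`. -/
def ParkingLabelIs {n : ℕ} (x y : Setoid (Fin n)) (p : Fin n) : Prop :=
  ∃ B₁ B₂ : Set (Fin n), IsBlock x B₁ ∧ IsBlock x B₂ ∧ B₁ ≠ B₂ ∧
    IsBlock y (B₁ ∪ B₂) ∧
    (∃ a ∈ B₁, ∀ b ∈ B₂, a < b) ∧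
    p ∈ B₁ ∧ (∀ i ∈ B₂, p ≤ i) ∧ (∀ j ∈ B₁, (∀ i ∈ B₂, j ≤ i) → j ≤ p)

/-- The label of the cover `w ⋖ z` in the `S_n` EL-labeling of `PE_n` coming from the
left-modular chain: `λ(w,z) = min { i-1 : x_i ≰ w and x_i ≤ z }`. -/
def LabelIs (n : ℕ) (w z : Setoid (Fin n)) (v : ℕ) : Prop :=
  ∃ i : ℕ, 1 ≤ i ∧ i ≤ n ∧ i - 1 = v ∧ (¬ xChain n i ≤ w ∧ xChain n i ≤ z) ∧
    ∀ j : ℕ, 1 ≤ j → j ≤ n → (¬ xChain n j ≤ w ∧ xChain n j ≤ z) → i ≤ j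

/-- The sequence of edge labels along a (saturated) chain, recorded as a list. -/
def chainLabels {α Λ : Type*} (lab : α → α → Λ) (c : List α) : List Λ :=
  List.zipWith lab c c.tail

/-- `c` is a saturated chain from `a` to `b` with respect to the cover relation `cov`. -/
def IsSatChainList {α : Type*} (cov : α → α → Prop) (a b : α) (c : List α) : Prop :=
  c.head? = some a ∧ c.getLast? = some b ∧ c.Chain' cov

/-- A chain is rising if its label sequence is strictly increasing. -/
def RisingChain {α Λ : Type*} [LT Λ] (lab : α → α → Λ) (c : List α) : Prop :=
  (chainLabels lab c).Chain' (· < ·)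

/-- `lab` is an EL-labeling with respect to the cover relation `cov` and order `le`:
every interval has a unique rising maximal chain, which is lexicographically least. -/
def IsELLabeling {α Λ : Type*} [PartialOrder Λ] (cov : α → α → Prop) (le : α → α → Prop)
    (lab : α → α → Λ) : Prop :=
  ∀ a b, le a b → ∃ c : List α, IsSatChainList cov a b c ∧ RisingChain lab c ∧
    (∀ c', IsSatChainList cov a b c' → RisingChain lab c' → c' = c) ∧
    (∀ c', IsSatChainList cov a b c' → c' ≠ c →
      List.Lex (· < ·) (chainLabels lab c) (chainLabels lab c'))

/-- If the meet of `x, x' ∈ PE_n` in `NC_n` (the common refinement `x ⊓ x'`)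
has `{n-1, n}` as a block, then the partition `w'` obtained by replacing this block by the
singletons `{n-1}` and `{n}` is the meet of `x` and `x'` in `PE_n`. -/
theorem PE_meet_desc (n : ℕ) (hn : 3 ≤ n) (x x' : Setoid (Fin n))
    (hx : PEmem x) (hx' : PEmem x')
    (hblk : IsBlock (x ⊓ x') {a : Fin n | a.val = n - 2 ∨ a.val = n - 1})
    (w' : Setoid (Fin n))
    (hw' : ∀ a b : Fin n, w' a b ↔
      (a = b ∨ ((x ⊓ x') a b ∧ ¬(a.val = n - 2 ∨ a.val = n - 1) ∧
        ¬(b.val = n - 2 ∨ b.val = n - 1)))) :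
    IsMeetPE x x' w' := by
  obtain ⟨a0, ha0⟩ := hblk
  have hn2 : n - 2 < n := by omega
  have hn1 : n - 1 < n := by omega
  set p : Fin n := ⟨n - 2, hn2⟩ with hp
  set q : Fin n := ⟨n - 1, hn1⟩ with hq
  have hpq : p ≠ q := by
    intro h
    have := congrArg Fin.val h
    simp only [hp, hq] at this
    omega
  -- membership of p, q in the block
  have hpmem : p ∈ {a : Fin n | a.val = n - 2 ∨ a.val = n - 1} := Or.inl rfl
  have hqmem : q ∈ {a : Fin n | a.val = n - 2 ∨ a.val = n - 1} := Or.inr rfl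
  -- the block is the class of any of its elements
  have hclass : ∀ a ∈ {a : Fin n | a.val = n - 2 ∨ a.val = n - 1}, ∀ b : Fin n,
      (x ⊓ x') a b ↔ (b.val = n - 2 ∨ b.val = n - 1) := by
    intro a ha b
    rw [ha0] at ha
    constructor
    · intro h
      have hb : b ∈ {b | (x ⊓ x') a0 b} := (x ⊓ x').trans' ha h
      rw [← ha0] at hb
      exact hb
    · intro h
      have hb : b ∈ {a : Fin n | a.val = n - 2 ∨ a.val = n - 1} := h
      rw [ha0] at hb
      exact (x ⊓ x').trans' ((x ⊓ x').symm' ha) hb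
  have hwnc : IsNoncrossing (x ⊓ x') := by
    intro i j k l hij hjk hkl hik hjl
    exact ⟨hx.1 i j k l hij hjk hkl hik.1 hjl.1, hx'.1 i j k l hij hjk hkl hik.2 hjl.2⟩
  refine ⟨⟨?_, ?_, ?_⟩, ?_, ?_, ?_⟩
  · -- noncrossing
    intro i j k l hij hjk hkl hik hjl
    rw [hw'] at hik hjl ⊢
    rcases hik with rfl | ⟨hik, hiS, hkS⟩
    · exact absurd (hij.trans hjk) (lt_irrefl i)
    rcases hjl with rfl | ⟨hjl, hjS, hlS⟩
    · exact absurd (hjk.trans hkl) (lt_irrefl j)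
    exact Or.inr ⟨hwnc i j k l hij hjk hkl hik hjl, hiS, hjS⟩
  · -- {n-1,n} not a block of w'
    rintro ⟨a, ha⟩
    have haS : a ∈ {b : Fin n | b.val = n - 2 ∨ b.val = n - 1} := by
      rw [ha]; exact w'.refl' a
    have hp' : w' a p := by rw [← Set.mem_setOf_eq (p := fun b => w' a b), ← ha]; exact hpmem
    have hq' : w' a q := by rw [← Set.mem_setOf_eq (p := fun b => w' a b), ← ha]; exact hqmem
    rw [hw'] at hp' hq'
    rcases hp' with rfl | ⟨_, hne, _⟩
    · rcases hq' with h | ⟨_, hne, _⟩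
      · exact hpq h
      · exact hne haS
    · exact hne haS
  · -- not (singleton {n} block and 1 ~ n-1)
    rintro ⟨_, a, b, ha, hb, hab⟩
    rw [hw'] at hab
    rcases hab with rfl | ⟨_, _, hbS⟩
    · omega
    · exact hbS (Or.inl hb)
  · -- w' ≤ x
    rw [Setoid.le_def]
    intro a b h
    rcases (hw' a b).mp h with rfl | ⟨h, _, _⟩
    · exact x.refl' a
    · exact h.1
  · -- w' ≤ x'
    rw [Setoid.le_def]
    intro a b h
    rcases (hw' a b).mp h with rfl | ⟨h, _, _⟩
    · exact x'.refl' a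
    · exact h.2
  · -- minimality
    intro z hz hzx hzx'
    have hzw : z ≤ x ⊓ x' := le_inf hzx hzx'
    rw [Setoid.le_def]
    intro a b hzab
    rw [hw']
    by_cases hab : a = b
    · exact Or.inl hab
    refine Or.inr ⟨Setoid.le_def.mp hzw hzab, ?_, ?_⟩ <;> intro hS
    all_goals {
      -- one of a, b lies in the special block; derive a contradiction with z ∈ PE
      exfalso
      apply hz.2.1
      -- first: the other endpoint is also in the block
      have hwab : (x ⊓ x') a b := Setoid.le_def.mp hzw hzab
      have haS : a.val = n - 2 ∨ a.val = n - 1 := by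
        first
        | exact hS
        | exact (hclass b hS a).mp ((x ⊓ x').symm' hwab)
      have hbS : b.val = n - 2 ∨ b.val = n - 1 := (hclass a haS b).mp hwab
      -- the block equals {a, b}
      refine ⟨a, ?_⟩
      ext c
      simp only [Set.mem_setOf_eq]
      constructor
      · intro hc
        have hca : c = a ∨ c = b := by
          rcases haS with h1 | h1 <;> rcases hbS with h2 | h2 <;> rcases hc with h3 | h3 <;>
            first
            | (exact Or.inl (Fin.ext (by omega)))
            | (exact Or.inr (Fin.ext (by omega)))
            | (exact absurd (Fin.ext (h1.trans h2.symm) : a = b) hab)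
        rcases hca with rfl | rfl
        · exact z.refl' c
        · exact hzab
      · intro hc
        exact (hclass a haS c).mp (Setoid.le_def.mp hzw hc)
    }
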